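/- Let a list of distinct naturals be built by repeatedly applying RGA insertion (insert id after position prev, skipping elements greater than id). For any fixed multiset of insertion operations whose causal dependencies are respected, all application orders consistent with causality yield the same final list. -/

import Mathlib

/-- RGA splice into a list segment: skip elements greater than `id`, insert before the
first smaller one (or at the end). -/
def rgaBody (id : ℕ) : List ℕ → List ℕ
  | [] => [id]
  | x :: xs => if x < id then id :: x :: xs else x :: rgaBody id xs

/-- Insert `id` after the element `p` in the list, using the RGA rule on the suffix. -/
def insertAfterKey (p id : ℕ) : List ℕ → List ℕ
  | [] => []
  | x :: xs => if x = p then x :: rgaBody id xs else x :: insertAfterKey p id xs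

/-- Apply one RGA insertion operation `(prev, id)`: `prev = none` means insert after
the head of the list; `prev = some p` means insert after the element `p`. -/
def rgaApply (L : List ℕ) (op : Option ℕ × ℕ) : List ℕ :=
  match op.1 with
  | none => rgaBody op.2 L
  | some p => insertAfterKey p op.2 L

/-- A sequence of insertion operations respects causality if each operation's `prev`
position is either the head or the id of an operation occurring earlier in the sequence. -/
def causallyValid (ops : List (Option ℕ × ℕ)) : Prop :=
  ∀ l₁ op l₂, ops = l₁ ++ op :: l₂ → ∀ p, op.1 = some p → p ∈ l₁.map Prod.snd

lemma rgaBody_comm (i j : ℕ) (h : i ≠ j) (L : List ℕ) :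
    rgaBody i (rgaBody j L) = rgaBody j (rgaBody i L) := by
  induction L with
  | nil => simp only [rgaBody]; split_ifs <;> first | rfl | omega
  | cons x xs ih =>
    by_cases h1 : x < i <;> by_cases h2 : x < j <;>
      simp only [rgaBody, h1, h2, if_pos, if_neg, if_true, if_false, ih] <;>
      split_ifs <;> simp_all <;> omega

lemma rgaBody_insertAfterKey (i p j : ℕ) (hp : p ≠ i) (hij : i ≠ j) (L : List ℕ) :
    rgaBody i (insertAfterKey p j L) = insertAfterKey p j (rgaBody i L) := by
  induction L with
  | nil => simp [rgaBody, insertAfterKey, hp.symm]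
  | cons x xs ih =>
    by_cases h1 : x = p <;> by_cases h2 : x < i <;>
      simp only [rgaBody, insertAfterKey, h1, h2, if_pos, if_neg, if_true, if_false, ih,
        rgaBody_comm i j hij] <;>
      split_ifs <;> simp_all [rgaBody, insertAfterKey, Ne.symm hp]

lemma insertAfterKey_comm (p i q j : ℕ) (hij : i ≠ j) (hpj : p ≠ j) (hqi : q ≠ i)
    (L : List ℕ) :
    insertAfterKey p i (insertAfterKey q j L) = insertAfterKey q j (insertAfterKey p i L) := by
  induction L with
  | nil => simp [insertAfterKey]
  | cons x xs ih =>
    by_cases h1 : x = p <;> by_cases h2 : x = q <;>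
      simp only [insertAfterKey, h1, h2, if_pos, if_neg, if_true, if_false, ih] <;>
      split_ifs <;>
        simp_all [insertAfterKey, rgaBody_comm i j hij,
          rgaBody_insertAfterKey i q j hqi hij, rgaBody_insertAfterKey j p i hpj hij.symm]

lemma rgaApply_comm (L : List ℕ) (a b : Option ℕ × ℕ)
    (h1 : a.2 ≠ b.2) (h2 : a.1 ≠ some b.2) (h3 : b.1 ≠ some a.2) :
    rgaApply (rgaApply L a) b = rgaApply (rgaApply L b) a := by
  obtain ⟨pa, ia⟩ := a
  obtain ⟨pb, ib⟩ := b
  simp only at h1 h2 h3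
  cases pa with
  | none =>
    cases pb with
    | none => simpa [rgaApply] using rgaBody_comm ib ia (Ne.symm h1) L
    | some q =>
      have hq : q ≠ ia := by simpa using h3
      simpa [rgaApply] using (rgaBody_insertAfterKey ia q ib hq h1 L).symm
  | some p =>
    cases pb with
    | none =>
      have hp : p ≠ ib := by simpa using h2
      simpa [rgaApply] using rgaBody_insertAfterKey ib p ia hp (Ne.symm h1) L
    | some q =>
      have hp : p ≠ ib := by simpa using h2
      have hq : q ≠ ia := by simpa using h3
      simpa [rgaApply] using insertAfterKey_comm q ib p ia (Ne.symm h1) hq hp L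

lemma foldl_bubble (a : Option ℕ × ℕ) :
    ∀ (l : List (Option ℕ × ℕ)) (L : List ℕ),
      (∀ b ∈ l, a.2 ≠ b.2 ∧ a.1 ≠ some b.2 ∧ b.1 ≠ some a.2) →
      List.foldl rgaApply L (a :: l) = List.foldl rgaApply L (l ++ [a])
  | [], L, _ => rfl
  | b :: t, L, h => by
    have hb := h b (by simp)
    have step : rgaApply (rgaApply L a) b = rgaApply (rgaApply L b) a :=
      rgaApply_comm L a b hb.1 hb.2.1 hb.2.2
    calc List.foldl rgaApply L (a :: b :: t)
        = List.foldl rgaApply (rgaApply (rgaApply L a) b) t := rfl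
      _ = List.foldl rgaApply (rgaApply L b) (a :: t) := by rw [step]; rfl
      _ = List.foldl rgaApply (rgaApply L b) (t ++ [a]) :=
          foldl_bubble a t (rgaApply L b) (fun c hc => h c (by simp [hc]))
      _ = List.foldl rgaApply L (b :: t ++ [a]) := rfl

lemma cv_prefix (l : List (Option ℕ × ℕ)) (op : Option ℕ × ℕ)
    (h : causallyValid (l ++ [op])) : causallyValid l := by
  intro l₁ op' l₂ he p hp
  exact h l₁ op' (l₂ ++ [op]) (by rw [he]; simp) p hp

lemma cv_remove (l₁ l₂ : List (Option ℕ × ℕ)) (op : Option ℕ × ℕ)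
    (h : causallyValid (l₁ ++ op :: l₂)) (hnd : ∀ b ∈ l₂, b.1 ≠ some op.2) :
    causallyValid (l₁ ++ l₂) := by
  intro m₁ b m₂ he p hp
  rcases List.append_eq_append_iff.mp he with ⟨t, ht₁, ht₂⟩ | ⟨t, ht₁, ht₂⟩
  · -- m₁ = l₁ ++ t, l₂ = t ++ b :: m₂  (orientation checked at compile)
    subst ht₁
    have horig : l₁ ++ op :: l₂ = (l₁ ++ op :: t) ++ b :: m₂ := by
      rw [ht₂]; simp
    have hmem := h (l₁ ++ op :: t) b m₂ horig p hp
    have hbmem : b ∈ l₂ := by rw [ht₂]; simp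
    have hne : p ≠ op.2 := by
      intro hcon; exact hnd b hbmem (by rw [hp, hcon])
    simp only [List.map_append, List.map_cons, List.mem_append, List.mem_cons] at hmem ⊢
    rcases hmem with h' | h' | h'
    · exact Or.inl h'
    · exact absurd h' hne
    · exact Or.inr h'
  · -- l₁ = m₁ ++ t, b :: m₂ = t ++ l₂
    cases t with
    | nil =>
      simp only [List.nil_append] at ht₂
      subst ht₁
      have hmem := h (m₁ ++ [op]) b m₂ (by rw [← ht₂]; simp) p hp
      have hbmem : b ∈ l₂ := by rw [← ht₂]; simp
      have hne : p ≠ op.2 := by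
        intro hcon; exact hnd b hbmem (by rw [hp, hcon])
      simp only [List.map_append, List.map_cons, List.mem_append, List.mem_cons,
        List.map_nil, List.mem_singleton] at hmem ⊢
      rcases hmem with h' | h'
      · exact h'
      · simp at h'; exact absurd h' hne
    | cons b' t' =>
      obtain ⟨hbb, hmm⟩ := List.cons_eq_cons.mp ht₂.symm
      subst hbb
      have hmm' : m₂ = t' ++ l₂ := by simpa using hmm.symm
      subst hmm'
      subst ht₁
      have horig : (m₁ ++ b' :: t') ++ op :: l₂ = m₁ ++ b' :: (t' ++ op :: l₂) := by simp
      exact h m₁ b' (t' ++ op :: l₂) horig p hp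

/-- RGA convergence: for a fixed multiset of insertion operations with distinct ids,
any two application orders consistent with causality yield the same final list. -/
theorem rga_convergence (ops1 ops2 : List (Option ℕ × ℕ))
    (hperm : ops1.Perm ops2)
    (hnodup : (ops1.map Prod.snd).Nodup)
    (hc1 : causallyValid ops1) (hc2 : causallyValid ops2) :
    ops1.foldl rgaApply [] = ops2.foldl rgaApply [] := by
  induction ops1 using List.reverseRecOn generalizing ops2 with
  | nil => rw [hperm.symm.eq_nil]
  | append_singleton l op ih =>
    have hop2 : op ∈ ops2 := hperm.subset (by simp)
    obtain ⟨l₁, l₂, rfl⟩ := List.append_of_mem hop2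
    -- permutation of remainders
    have hperm' : l.Perm (l₁ ++ l₂) := by
      have h1 : (l ++ [op]).Perm (op :: l) := List.perm_append_singleton op l
      have h2 : (l₁ ++ op :: l₂).Perm (op :: (l₁ ++ l₂)) := List.perm_middle
      exact ((h1.symm.trans hperm).trans h2).cons_inv
    -- nodup facts
    rw [List.map_append] at hnodup
    have hnodup_l : (l.map Prod.snd).Nodup := (List.nodup_append.mp hnodup).1
    have hop_not : op.2 ∉ l.map Prod.snd := by
      have := (List.nodup_append'.mp hnodup).2.2
      intro hmem
      exact this hmem (by simp)
    have hnodup2 : ((l₁ ++ op :: l₂).map Prod.snd).Nodup := by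
      have : ((l ++ [op]).map Prod.snd).Nodup := by rw [List.map_append]; exact hnodup
      exact (hperm.map Prod.snd).nodup this
    rw [List.map_append, List.map_cons] at hnodup2
    rw [List.nodup_middle] at hnodup2
    have hop_not12 : op.2 ∉ l₁.map Prod.snd ++ l₂.map Prod.snd :=
      (List.nodup_cons.mp hnodup2).1
    have hnodup12 : (l₁.map Prod.snd ++ l₂.map Prod.snd).Nodup :=
      (List.nodup_cons.mp hnodup2).2
    -- nothing depends on op.2
    have hb2 : ∀ b ∈ l₂, b.1 ≠ some op.2 := by
      intro b hb heq
      have hbmem : b ∈ l ++ [op] := hperm.symm.subset (by simp [hb])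
      rcases List.mem_append.mp hbmem with hbl | hbo
      · obtain ⟨u, v, rfl⟩ := List.append_of_mem hbl
        have hm := hc1 u b (v ++ [op]) (by simp) op.2 heq
        apply hop_not
        rw [List.map_append]
        exact List.mem_append_left _ hm
      · have hbop : b = op := by simpa using hbo
        subst hbop
        exact hop_not (hc1 l b [] rfl b.2 heq)
    -- side conditions for bubbling
    have hside : ∀ b ∈ l₂, op.2 ≠ b.2 ∧ op.1 ≠ some b.2 ∧ b.1 ≠ some op.2 := by
      intro b hb
      have hb2mem : b.2 ∈ l₂.map Prod.snd := List.mem_map_of_mem hb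
      refine ⟨?_, ?_, hb2 b hb⟩
      · intro hcon
        exact hop_not12 (List.mem_append_right _ (hcon ▸ hb2mem))
      · intro hcon
        have hp := hc2 l₁ op l₂ rfl b.2 hcon
        have : b.2 ∉ l₁.map Prod.snd :=
          fun hx => (List.disjoint_of_nodup_append hnodup12) hx hb2mem
        exact this hp
    -- recursive equality
    have hrec : l.foldl rgaApply [] = (l₁ ++ l₂).foldl rgaApply [] := by
      exact ih (l₁ ++ l₂) hperm' hnodup_l (cv_prefix l op hc1)
        (cv_remove l₁ l₂ op hc2 hb2)
    have key : List.foldl rgaApply [] (l₁ ++ op :: l₂)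
        = List.foldl rgaApply (List.foldl rgaApply [] (l₁ ++ l₂)) [op] := by
      simp only [List.foldl_append]
      rw [show List.foldl rgaApply (List.foldl rgaApply [] l₁) (op :: l₂)
            = List.foldl rgaApply (List.foldl rgaApply [] l₁) (l₂ ++ [op]) from
          foldl_bubble op l₂ _ hside, List.foldl_append]
    rw [List.foldl_append, hrec, key]
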